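/- Let X be a star set for eigenvalue μ in a graph G, with H = G - X the star complement. Define ⟨x,y⟩ = xᵀ(μI - A(H))^{-1}y for vectors x,y, and for u ∈ X let b_u be the characteristic vector of N_H(u). Then ⟨b_u, b_u⟩ = μ for all u ∈ X; ⟨b_u, b_v⟩ = -1 if u ∼ v; and ⟨b_u, b_v⟩ = 0 if u ≠ v and u ≁ v. -/

import Mathlib

open Matrix

open scoped Classical

noncomputable section

variable {V : Type*} [Fintype V] [DecidableEq V]

/-- The real adjacency matrix of a graph. -/
def adjMat (G : SimpleGraph V) : Matrix V V ℝ :=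
  letI := Classical.decRel G.Adj
  G.adjMatrix ℝ

/-- `μ` is an (adjacency) eigenvalue of `G`. -/
def IsEigen (G : SimpleGraph V) (μ : ℝ) : Prop :=
  Module.End.HasEigenvalue (Matrix.toLin' (adjMat G)) μ

/-- The multiplicity of `μ` as an eigenvalue of `G`. -/
def eigMult (G : SimpleGraph V) (μ : ℝ) : ℕ :=
  Module.finrank ℝ (Module.End.eigenspace (Matrix.toLin' (adjMat G)) μ)

/-- `X` is a star set for `μ` in `G`: `|X|` equals the multiplicity of `μ` and `μ` is
not an eigenvalue of `G - X`. -/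
def IsStarSet (G : SimpleGraph V) (μ : ℝ) (X : Finset V) : Prop :=
  X.card = eigMult G μ ∧ ¬ IsEigen (G.induce ((↑X : Set V)ᶜ)) μ

/-- `μ` is a non-main eigenvalue: every `μ`-eigenvector is orthogonal to the
all-ones vector. -/
def IsNonMain (G : SimpleGraph V) (μ : ℝ) : Prop :=
  ∀ x : V → ℝ, (adjMat G).mulVec x = μ • x → x ⬝ᵥ (fun _ => 1) = 0


theorem adjMat_apply (G : SimpleGraph V) (v w : V) :
    adjMat G v w = if G.Adj v w then 1 else 0 := by
  by_cases h : G.Adj v w <;> simp [adjMat, h]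

/-- With `X` the set of left-hand vertices a star set for `μ`, `H = G - X` (with
adjacency matrix `C`), `b_u` the indicator vector of `N_H(u)` and
`⟨x,y⟩ = xᵀ(μI - A(H))⁻¹y`: `⟨b_u,b_u⟩ = μ`, `⟨b_u,b_v⟩ = -1` if `u ∼ v`, and
`⟨b_u,b_v⟩ = 0` if `u ≠ v`, `u ≁ v`. -/
theorem starSet_bilinear {α β : Type*} [Fintype α] [Fintype β] [DecidableEq α]
    [DecidableEq β] (G : SimpleGraph (α ⊕ β)) (μ : ℝ)
    (X : Finset (α ⊕ β)) (hX : X = Finset.univ.map ⟨Sum.inl, Sum.inl_injective⟩)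
    (hstar : IsStarSet G μ X)
    (C : Matrix β β ℝ) (hC : C = (adjMat G).submatrix Sum.inr Sum.inr)
    (b : α → β → ℝ) (hb : ∀ u j, b u j = if G.Adj (Sum.inl u) (Sum.inr j) then 1 else 0)
    (inner : (β → ℝ) → (β → ℝ) → ℝ)
    (hinner : ∀ x y, inner x y = x ⬝ᵥ ((μ • (1 : Matrix β β ℝ) - C)⁻¹ *ᵥ y)) :
    (∀ u : α, inner (b u) (b u) = μ) ∧
    (∀ u v : α, G.Adj (Sum.inl u) (Sum.inl v) → inner (b u) (b v) = -1) ∧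
    (∀ u v : α, u ≠ v → ¬ G.Adj (Sum.inl u) (Sum.inl v) → inner (b u) (b v) = 0) := by
  classical
  -- adjacency matrix entries
  have hA : ∀ v w, adjMat G v w = if G.Adj v w then 1 else 0 := by
    intro v w; by_cases h : G.Adj v w <;> simp [adjMat, h]
  have hAsymm : ∀ v w, adjMat G v w = adjMat G w v := by
    intro v w; rw [hA, hA]; simp [G.adj_comm]
  -- the complement of X as a set, and the equivalence with β
  set S : Set (α ⊕ β) := ((↑X : Set (α ⊕ β))ᶜ) with hS
  have hmemS : ∀ w : α ⊕ β, w ∈ S ↔ ∃ j : β, w = Sum.inr j := by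
    intro w
    cases w with
    | inl a =>
      simp only [hS, Set.mem_compl_iff, Finset.mem_coe, hX]
      simp
    | inr j =>
      simp only [hS, Set.mem_compl_iff, Finset.mem_coe, hX]
      simp
  have hinvex : ∀ s : S, ∃ j, (s : α ⊕ β) = Sum.inr j := fun s => (hmemS s).1 s.2
  choose inv hinvspec using hinvex
  let e : β ≃ S :=
    { toFun := fun j => ⟨Sum.inr j, (hmemS _).2 ⟨j, rfl⟩⟩
      invFun := inv
      left_inv := fun j => Sum.inr_injective (hinvspec ⟨Sum.inr j, (hmemS _).2 ⟨j, rfl⟩⟩).symm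
      right_inv := fun s => Subtype.ext (hinvspec s).symm }
  have he : ∀ j : β, ((e j : S) : α ⊕ β) = Sum.inr j := fun j => rfl
  -- μ is not an eigenvalue of C
  have key : ∀ y : β → ℝ, C *ᵥ y = μ • y → y = 0 := by
    intro y hy
    by_contra hy0
    apply hstar.2
    obtain ⟨j0, hj0⟩ : ∃ j, y j ≠ 0 := by
      by_contra h; push_neg at h; exact hy0 (funext h)
    set y' : S → ℝ := fun s => y (e.symm s) with hy'
    refine Module.End.hasEigenvalue_of_hasEigenvector (x := y') ⟨?_, ?_⟩
    · rw [Module.End.mem_eigenspace_iff, Matrix.toLin'_apply]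
      funext s
      have hsum : (adjMat (G.induce S) *ᵥ y') s
          = ∑ k : β, C (e.symm s) k * y k := by
        rw [Matrix.mulVec, dotProduct]
        rw [← Equiv.sum_comp e (fun t => adjMat (G.induce S) s t * y' t)]
        refine Finset.sum_congr rfl fun k _ => ?_
        have h1 : adjMat (G.induce S) s (e k) =
            if G.Adj (s : α ⊕ β) (Sum.inr k) then 1 else 0 := by
          rw [adjMat_apply, ← he k]
          simp [SimpleGraph.comap_adj]
        have h2 : (s : α ⊕ β) = Sum.inr (e.symm s) := hinvspec s
        have h3 : C (e.symm s) k = if G.Adj (Sum.inr (e.symm s)) (Sum.inr k) then 1 else 0 := by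
          rw [hC]; simp [Matrix.submatrix_apply, hA]
        rw [h1, h3, h2]
        simp [y']
      have := congrFun hy (e.symm s)
      rw [Matrix.mulVec, dotProduct] at this
      rw [hsum]
      simpa [y'] using this
    · intro h
      apply hj0
      have := congrFun h (e j0)
      simpa [y'] using this
  -- invertibility of M = μ•1 - C
  set M : Matrix β β ℝ := μ • (1 : Matrix β β ℝ) - C with hM
  have hMv : ∀ y : β → ℝ, M *ᵥ y = μ • y - C *ᵥ y := by
    intro y
    rw [hM, Matrix.sub_mulVec, Matrix.smul_mulVec, Matrix.one_mulVec]
  have hMinj : Function.Injective M.mulVec := by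
    rw [show M.mulVec = M.mulVecLin from rfl, ← LinearMap.ker_eq_bot, LinearMap.ker_eq_bot']
    intro y hy
    rw [Matrix.mulVecLin_apply, hMv, sub_eq_zero] at hy
    exact key y hy.symm
  have hdet : IsUnit M.det := (Matrix.isUnit_iff_isUnit_det M).mp
    (Matrix.mulVec_injective_iff_isUnit.mp hMinj)
  have hMinvM : M⁻¹ * M = 1 := Matrix.nonsing_inv_mul M hdet
  -- dimension of the eigenspace
  set E := Module.End.eigenspace (Matrix.toLin' (adjMat G)) μ with hE
  have hdim : Module.finrank ℝ E = Fintype.card α := by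
    have h1 : X.card = Fintype.card α := by rw [hX]; simp
    have h2 : eigMult G μ = Module.finrank ℝ E := rfl
    rw [← h2, ← hstar.1, h1]
  -- the projection of the eigenspace to ℝ^α
  set π : E →ₗ[ℝ] (α → ℝ) := (LinearMap.funLeft ℝ ℝ Sum.inl).comp E.subtype with hπ
  have heq : ∀ f : α ⊕ β → ℝ, f ∈ E ↔ adjMat G *ᵥ f = μ • f := by
    intro f
    rw [hE, Module.End.mem_eigenspace_iff, Matrix.toLin'_apply]
  have hrow : ∀ (f : α ⊕ β → ℝ) (w : α ⊕ β), (adjMat G *ᵥ f) w =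
      (∑ a : α, adjMat G w (Sum.inl a) * f (Sum.inl a)) +
      (∑ k : β, adjMat G w (Sum.inr k) * f (Sum.inr k)) := by
    intro f w
    rw [Matrix.mulVec, dotProduct, Fintype.sum_sum_type]
  have hπinj : Function.Injective π := by
    rw [← LinearMap.ker_eq_bot, LinearMap.ker_eq_bot']
    rintro ⟨f, hf⟩ hker
    have hfl : ∀ a : α, f (Sum.inl a) = 0 := by
      intro a
      have := congrFun (show π ⟨f, hf⟩ = 0 from hker) a
      simpa [hπ, LinearMap.funLeft] using this
    rw [heq] at hf
    have hy : C *ᵥ (fun k => f (Sum.inr k)) = μ • (fun k => f (Sum.inr k)) := by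
      funext j
      have h1 := congrFun hf (Sum.inr j)
      rw [hrow] at h1
      simp only [hfl, mul_zero, Finset.sum_const_zero, zero_add, Pi.smul_apply, smul_eq_mul] at h1
      rw [Matrix.mulVec, dotProduct]
      simp only [Pi.smul_apply, smul_eq_mul]
      rw [← h1]
      refine Finset.sum_congr rfl fun k _ => ?_
      rw [hC]; rfl
    have hz := key _ hy
    apply Subtype.ext
    funext w
    cases w with
    | inl a => exact hfl a
    | inr k => exact congrFun hz k
  have hπsurj : Function.Surjective π := by
    refine (LinearMap.injective_iff_surjective_of_finrank_eq_finrank ?_).mp hπinj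
    rw [hdim]
    simp [Module.finrank_pi]
  -- the main computation
  have main : ∀ u v : α, b u ⬝ᵥ (M⁻¹ *ᵥ b v) =
      (if u = v then μ else 0) - adjMat G (Sum.inl u) (Sum.inl v) := by
    intro u v
    obtain ⟨⟨f, hfE⟩, hfπ⟩ := hπsurj (Pi.single v 1)
    have hfl : ∀ a : α, f (Sum.inl a) = (Pi.single v 1 : α → ℝ) a := by
      intro a
      have := congrFun (show π ⟨f, hfE⟩ = Pi.single v 1 from hfπ) a
      simpa [hπ, LinearMap.funLeft] using this
    rw [heq] at hfE
    set y : β → ℝ := fun k => f (Sum.inr k) with hy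
    -- rows indexed by β : (μ•1 - C) y = b v
    have hMy : M *ᵥ y = b v := by
      funext j
      have h1 := congrFun hfE (Sum.inr j)
      rw [hrow] at h1
      have h2 : (∑ a : α, adjMat G (Sum.inr j) (Sum.inl a) * f (Sum.inl a)) = b v j := by
        rw [Finset.sum_congr rfl (fun a _ => by rw [hfl a])]
        rw [Finset.sum_eq_single v]
        · rw [Pi.single_eq_same, mul_one, hb, hAsymm, hA]
        · intro c _ hc; rw [Pi.single_eq_of_ne hc, mul_zero]
        · intro h; exact absurd (Finset.mem_univ v) h
      have h3 : (∑ k : β, adjMat G (Sum.inr j) (Sum.inr k) * f (Sum.inr k)) = (C *ᵥ y) j := by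
        rw [Matrix.mulVec, dotProduct]
        exact Finset.sum_congr rfl fun k _ => by rw [hC]; rfl
      rw [h2, h3] at h1
      have h5 : (μ • f) (Sum.inr j) = μ * y j := by simp [hy]
      rw [h5] at h1
      have h6 := congrFun (hMv y) j
      simp only [Pi.sub_apply, Pi.smul_apply, smul_eq_mul] at h6
      rw [h6]
      linarith
    have hinv : M⁻¹ *ᵥ b v = y := by
      rw [← hMy, Matrix.mulVec_mulVec, hMinvM, Matrix.one_mulVec]
    -- row indexed by inl u
    have h1 := congrFun hfE (Sum.inl u)
    rw [hrow] at h1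
    have h2 : (∑ a : α, adjMat G (Sum.inl u) (Sum.inl a) * f (Sum.inl a)) =
        adjMat G (Sum.inl u) (Sum.inl v) := by
      rw [Finset.sum_congr rfl (fun a _ => by rw [hfl a])]
      rw [Finset.sum_eq_single v]
      · rw [Pi.single_eq_same, mul_one]
      · intro c _ hc; rw [Pi.single_eq_of_ne hc, mul_zero]
      · intro h; exact absurd (Finset.mem_univ v) h
    have h3 : (∑ k : β, adjMat G (Sum.inl u) (Sum.inr k) * f (Sum.inr k)) =
        b u ⬝ᵥ (M⁻¹ *ᵥ b v) := by
      rw [hinv, dotProduct]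
      exact Finset.sum_congr rfl fun k _ => by rw [hb, hA]
    have h4 : μ • f (Sum.inl u) = if u = v then μ else 0 := by
      rw [hfl u]
      by_cases h : u = v
      · subst h; simp
      · rw [Pi.single_eq_of_ne h]; simp [h]
    rw [h2, h3] at h1
    have h5 := congrFun (rfl : f = f) (Sum.inl u)
    rw [show (μ • f) (Sum.inl u) = μ • f (Sum.inl u) from rfl, h4] at h1
    linarith
  -- conclusions
  refine ⟨?_, ?_, ?_⟩
  · intro u
    rw [hinner, main u u]
    rw [hA]
    simp
  · intro u v huv
    rw [hinner, main u v]
    have hne : u ≠ v := by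
      rintro rfl; exact G.irrefl huv
    rw [hA]
    simp [hne, huv]
  · intro u v hne hnadj
    rw [hinner, main u v, hA]
    simp [hne, hnadj]

end
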